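/- For real x, y, p > 0 and λ, μ > 0 with λμ = xy, R_J(x+λ, y+λ, λ, p+λ) + R_J(x+μ, y+μ, μ, p+μ) = R_J(x, y, 0, p) − 3 R_C(a, b), where a = p²(λ + μ + x + y) and b = p(p+λ)(p+μ) (so that b − a = p(p−x)(p−y)). -/

import Mathlib

open MeasureTheory Real

noncomputable def RC (x y : ℝ) : ℝ :=
  (1/2) * ∫ t in Set.Ioi (0:ℝ), (Real.sqrt (t + x))⁻¹ * (t + y)⁻¹

noncomputable def RF (x y z : ℝ) : ℝ :=
  (1/2) * ∫ t in Set.Ioi (0:ℝ), (Real.sqrt ((t + x) * (t + y) * (t + z)))⁻¹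

noncomputable def RD (x y z : ℝ) : ℝ :=
  (3/2) * ∫ t in Set.Ioi (0:ℝ),
    (Real.sqrt ((t + x) * (t + y)))⁻¹ * ((t + z) * Real.sqrt (t + z))⁻¹

noncomputable def RJ (x y z p : ℝ) : ℝ :=
  (3/2) * ∫ t in Set.Ioi (0:ℝ),
    (Real.sqrt ((t + x) * (t + y) * (t + z)))⁻¹ * (t + p)⁻¹

noncomputable def RG (x y z : ℝ) : ℝ :=
  (1/4) * ∫ t in Set.Ioi (0:ℝ),
    (Real.sqrt ((t + x) * (t + y) * (t + z)))⁻¹ *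
      (x / (t + x) + y / (t + y) + z / (t + z)) * t

section helpers
open Set

-- substitution wrapper
lemma my_subst {f f' : ℝ → ℝ} {s : Set ℝ} (hs : MeasurableSet s)
    (hf' : ∀ v ∈ s, HasDerivWithinAt f (f' v) s v) (hinj : Set.InjOn f s) (g : ℝ → ℝ) :
    ∫ u in f '' s, g u = ∫ v in s, |f' v| * g (f v) := by
  simpa [smul_eq_mul] using integral_image_eq_integral_abs_deriv_smul hs hf' hinj g

-- integrable tail
lemma int_tail {c : ℝ} (hc : 0 < c) : IntegrableOn (fun t : ℝ => (Real.sqrt (t^3))⁻¹) (Ioi c) := by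
  refine (integrableOn_Ioi_rpow_of_lt (show (-(3/2) : ℝ) < -1 by norm_num) hc).congr_fun
    (fun t ht => ?_) measurableSet_Ioi
  have ht0 : (0:ℝ) < t := hc.trans ht
  beta_reduce
  rw [Real.rpow_neg ht0.le, Real.sqrt_eq_rpow, ← Real.rpow_natCast t 3, ← Real.rpow_mul ht0.le]
  norm_num

lemma int_head : IntegrableOn (fun t : ℝ => (Real.sqrt t)⁻¹) (Ioc (0:ℝ) 1) := by
  have h := (intervalIntegral.intervalIntegrable_rpow' (show (-1:ℝ) < -(1/2) by norm_num)
      (a := 0) (b := 1))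
  rw [intervalIntegrable_iff_integrableOn_Ioc_of_le (by norm_num)] at h
  refine h.congr_fun (fun t ht => ?_) measurableSet_Ioc
  beta_reduce
  rw [Real.rpow_neg ht.1.le, Real.sqrt_eq_rpow]


set_option maxHeartbeats 2000000 in
lemma key15 (x y p l m : ℝ) (hx : 0 < x) (hy : 0 < y) (hp : 0 < p)
    (hl : 0 < l) (hm : 0 < m) (hlm : l * m = x * y) (hml : m ≤ l) :
    RJ (x + l) (y + l) l (p + l) + RJ (x + m) (y + m) m (p + m) =
      RJ x y 0 p - 3 * RC (p ^ 2 * (l + m + x + y)) (p * (p + l) * (p + m)) := by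
  have h1 : ∀ a : ℝ, 0 < a → RJ (x + a) (y + a) a (p + a) =
      (3/2) * ∫ t in Ioi a, (Real.sqrt ((t + x) * (t + y) * t))⁻¹ * (t + p)⁻¹ := by
    intro a ha
    unfold RJ
    congr 1
    have himg : (fun t : ℝ => a + t) '' Ioi (0:ℝ) = Ioi a := by
      rw [Set.image_const_add_Ioi]; norm_num
    rw [← himg, my_subst (f := fun t : ℝ => a + t) (f' := fun _ => 1) measurableSet_Ioi
        (fun v _ => (by simpa using ((hasDerivAt_id v).const_add a).hasDerivWithinAt :
          HasDerivWithinAt (fun t : ℝ => a + t) 1 (Ioi 0) v))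
        (fun v₁ _ v₂ _ h => by simpa using h) _]
    refine setIntegral_congr_fun measurableSet_Ioi fun t ht => ?_
    rw [abs_one, one_mul]
    ring_nf
  have h3 : RJ x y 0 p = (3/2) * ∫ t in Ioi (0:ℝ),
      (Real.sqrt ((t + x) * (t + y) * t))⁻¹ * (t + p)⁻¹ := by
    unfold RJ; norm_num
  have h4 : RC (p ^ 2 * (l + m + x + y)) (p * (p + l) * (p + m)) =
      (1/2) * ∫ t in Ioi (0:ℝ),
        (Real.sqrt (t + p ^ 2 * (l + m + x + y)))⁻¹ * (t + p * (p + l) * (p + m))⁻¹ := rfl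
  have hGint : IntegrableOn
      (fun t : ℝ => (Real.sqrt ((t + x) * (t + y) * t))⁻¹ * (t + p)⁻¹) (Ioi 0) := by
    set G : ℝ → ℝ := fun t => (Real.sqrt ((t + x) * (t + y) * t))⁻¹ * (t + p)⁻¹ with hG
    have hmeas : Measurable G := by fun_prop
    have hGpos : ∀ t : ℝ, 0 < t → 0 < Real.sqrt ((t + x) * (t + y) * t) := fun t ht =>
      Real.sqrt_pos.2 (by positivity)
    rw [← Set.Ioc_union_Ioi_eq_Ioi (le_of_lt one_pos)]
    refine IntegrableOn.union ?_ ?_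
    · refine Integrable.mono' ((int_head).const_mul ((Real.sqrt (x*y))⁻¹ * p⁻¹))
        hmeas.aestronglyMeasurable ?_
      filter_upwards [ae_restrict_mem measurableSet_Ioc] with t ht
      have ht0 : 0 < t := ht.1
      have h1 : Real.sqrt (x*y) * Real.sqrt t ≤ Real.sqrt ((t + x) * (t + y) * t) := by
        rw [← Real.sqrt_mul (by positivity)]
        have : x * y * t ≤ (t + x) * (t + y) * t := by
          nlinarith [mul_nonneg (mul_nonneg ht0.le ht0.le) ht0.le, mul_nonneg (mul_nonneg ht0.le ht0.le) (by positivity : (0:ℝ) ≤ x + y)]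
        exact Real.sqrt_le_sqrt this
      have h2 : (Real.sqrt ((t + x) * (t + y) * t))⁻¹ ≤ (Real.sqrt (x*y) * Real.sqrt t)⁻¹ :=
        inv_anti₀ (by positivity) h1
      have h3 : (t + p)⁻¹ ≤ p⁻¹ := inv_anti₀ hp (by linarith)
      have habs : |G t| = G t := abs_of_nonneg (by positivity)
      rw [Real.norm_eq_abs, habs, hG]
      calc (Real.sqrt ((t + x) * (t + y) * t))⁻¹ * (t + p)⁻¹
          ≤ (Real.sqrt (x*y) * Real.sqrt t)⁻¹ * p⁻¹ := by
            apply mul_le_mul h2 h3 (by positivity) (by positivity)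
        _ = (Real.sqrt (x*y))⁻¹ * p⁻¹ * (Real.sqrt t)⁻¹ := by rw [mul_inv]; ring
    · refine Integrable.mono' (int_tail one_pos) hmeas.aestronglyMeasurable ?_
      filter_upwards [ae_restrict_mem measurableSet_Ioi] with t ht
      have ht1 : (1:ℝ) < t := ht
      have ht0 : (0:ℝ) < t := one_pos.trans ht1
      have hcube : t^3 ≤ (t + x) * (t + y) * t := by
        nlinarith [mul_nonneg (sq_nonneg t) (by positivity : (0:ℝ) ≤ x + y), mul_nonneg ht0.le (mul_pos hx hy).le]
      have h1 : Real.sqrt (t^3) ≤ Real.sqrt ((t + x) * (t + y) * t) := Real.sqrt_le_sqrt hcube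
      have h2 : (Real.sqrt ((t + x) * (t + y) * t))⁻¹ ≤ (Real.sqrt (t^3))⁻¹ :=
        inv_anti₀ (Real.sqrt_pos.2 (by positivity)) h1
      have h3 : (t + p)⁻¹ ≤ 1 := by
        rw [inv_le_one_iff₀]; right; linarith
      have habs : |G t| = G t := abs_of_nonneg (by positivity)
      rw [Real.norm_eq_abs, habs, hG]
      calc (Real.sqrt ((t + x) * (t + y) * t))⁻¹ * (t + p)⁻¹
          ≤ (Real.sqrt (t^3))⁻¹ * 1 := mul_le_mul h2 h3 (by positivity) (by positivity)
        _ = (Real.sqrt (t^3))⁻¹ := mul_one _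
  have hψint : IntegrableOn
      (fun v : ℝ => (Real.sqrt ((v + x) * (v + y) * v))⁻¹ * (v * (x * y + p * v)⁻¹))
      (Ioi l) := by
    set ψ : ℝ → ℝ := fun v => (Real.sqrt ((v + x) * (v + y) * v))⁻¹ * (v * (x * y + p * v)⁻¹)
      with hψ
    have hmeas : Measurable ψ := by fun_prop
    refine Integrable.mono' ((int_tail hl).const_mul p⁻¹) hmeas.aestronglyMeasurable ?_
    filter_upwards [ae_restrict_mem measurableSet_Ioi] with v hv
    have hv0 : 0 < v := hl.trans hv
    have hcube : v^3 ≤ (v + x) * (v + y) * v := by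
      nlinarith [mul_nonneg (sq_nonneg v) (by positivity : (0:ℝ) ≤ x + y), mul_nonneg hv0.le (mul_pos hx hy).le]
    have h1 : Real.sqrt (v^3) ≤ Real.sqrt ((v + x) * (v + y) * v) := Real.sqrt_le_sqrt hcube
    have h2 : (Real.sqrt ((v + x) * (v + y) * v))⁻¹ ≤ (Real.sqrt (v^3))⁻¹ :=
      inv_anti₀ (Real.sqrt_pos.2 (by positivity)) h1
    have h3 : v * (x * y + p * v)⁻¹ ≤ p⁻¹ := by
      rw [mul_inv_le_iff₀ (by positivity : (0:ℝ) < x * y + p * v)]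
      have hv' : p⁻¹ * (x * y + p * v) = p⁻¹ * (x*y) + v := by field_simp
      nlinarith [mul_pos (inv_pos.2 hp) (mul_pos hx hy)]
    have habs : |ψ v| = ψ v := abs_of_nonneg (by positivity)
    rw [Real.norm_eq_abs, habs, hψ]
    calc (Real.sqrt ((v + x) * (v + y) * v))⁻¹ * (v * (x * y + p * v)⁻¹)
        ≤ (Real.sqrt (v^3))⁻¹ * p⁻¹ := mul_le_mul h2 h3 (by positivity) (by positivity)
      _ = p⁻¹ * (Real.sqrt (v^3))⁻¹ := mul_comm _ _
  have hGl : IntegrableOn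
      (fun t : ℝ => (Real.sqrt ((t + x) * (t + y) * t))⁻¹ * (t + p)⁻¹) (Ioi l) :=
    hGint.mono_set (Ioi_subset_Ioi hl.le)
  have hsplit : (∫ t in Ioi (0:ℝ), (Real.sqrt ((t + x) * (t + y) * t))⁻¹ * (t + p)⁻¹)
      = (∫ t in Ioo 0 m, (Real.sqrt ((t + x) * (t + y) * t))⁻¹ * (t + p)⁻¹)
        + ∫ t in Ioi m, (Real.sqrt ((t + x) * (t + y) * t))⁻¹ * (t + p)⁻¹ := by
    rw [← Set.Ioc_union_Ioi_eq_Ioi hm.le,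
      setIntegral_union (Set.Ioc_disjoint_Ioi le_rfl) measurableSet_Ioi
        (hGint.mono_set Set.Ioc_subset_Ioi_self) (hGint.mono_set (Ioi_subset_Ioi hm.le)),
      integral_Ioc_eq_integral_Ioo]
  have hB : (∫ t in Ioo 0 m, (Real.sqrt ((t + x) * (t + y) * t))⁻¹ * (t + p)⁻¹)
      = ∫ v in Ioi l, (Real.sqrt ((v + x) * (v + y) * v))⁻¹ * (v * (x * y + p * v)⁻¹) := by
    have hxy : 0 < x * y := mul_pos hx hy
    have himg : (fun v : ℝ => x * y * v⁻¹) '' Ioi l = Ioo 0 m := by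
      ext u
      simp only [mem_image, mem_Ioi, mem_Ioo]
      constructor
      · rintro ⟨v, hv, rfl⟩
        have hv0 : 0 < v := hl.trans hv
        constructor
        · positivity
        · rw [mul_inv_lt_iff₀ hv0]
          nlinarith
      · rintro ⟨hu0, hum⟩
        refine ⟨x * y * u⁻¹, ?_, ?_⟩
        · rw [lt_mul_inv_iff₀ hu0]
          nlinarith
        · field_simp
    have hderiv : ∀ v ∈ Ioi l, HasDerivWithinAt (fun v : ℝ => x * y * v⁻¹)
        (x * y * -((v:ℝ)^2)⁻¹) (Ioi l) v := fun v hv =>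
      ((hasDerivAt_inv (hl.trans hv).ne').const_mul (x*y)).hasDerivWithinAt
    have hinj : Set.InjOn (fun v : ℝ => x * y * v⁻¹) (Ioi l) := by
      intro v₁ h₁ v₂ h₂ h
      have h₁0 : v₁ ≠ 0 := (hl.trans h₁).ne'
      have h₂0 : v₂ ≠ 0 := (hl.trans h₂).ne'
      field_simp at h
      linarith [h]
    rw [← himg, my_subst measurableSet_Ioi hderiv hinj]
    refine setIntegral_congr_fun measurableSet_Ioi fun v hv => ?_
    have hv0 : 0 < v := hl.trans hv
    have habs : |x * y * -((v:ℝ)^2)⁻¹| = x * y * ((v:ℝ)^2)⁻¹ := by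
      rw [mul_neg, abs_neg, abs_of_pos (by positivity)]
    have hQQ : ((x*y*v⁻¹) + x) * ((x*y*v⁻¹) + y) * (x*y*v⁻¹)
        = (x*y*((v:ℝ)^2)⁻¹)^2 * ((v+x)*(v+y)*v) := by
      field_simp
      ring
    have hsq : Real.sqrt (((x*y*v⁻¹) + x) * ((x*y*v⁻¹) + y) * (x*y*v⁻¹))
        = x*y*((v:ℝ)^2)⁻¹ * Real.sqrt ((v+x)*(v+y)*v) := by
      rw [hQQ, Real.sqrt_mul (sq_nonneg _), Real.sqrt_sq (by positivity)]
    have hA : 0 < Real.sqrt ((v+x)*(v+y)*v) := Real.sqrt_pos.2 (by positivity)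
    simp only [habs, hsq]
    have h1 : (0:ℝ) < x * y + p * v := by positivity
    have h2 : (0:ℝ) < x * y * v⁻¹ + p := by positivity
    field_simp
  have hC0 : (∫ w in Ioi (l + m), (Real.sqrt (w + x + y))⁻¹ * (p * w + (p ^ 2 + x * y))⁻¹)
      = ∫ v in Ioi l, ((Real.sqrt ((v + x) * (v + y) * v))⁻¹ * (v * (x * y + p * v)⁻¹)
          - (Real.sqrt ((v + x) * (v + y) * v))⁻¹ * (v + p)⁻¹) := by
    have hxy : 0 < x * y := mul_pos hx hy
    have himg : (fun v : ℝ => v + x * y * v⁻¹) '' Ioi l = Ioi (l + m) := by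
      ext w
      simp only [mem_image, mem_Ioi]
      constructor
      · rintro ⟨v, hv, rfl⟩
        have hv0 : 0 < v := hl.trans hv
        have key : v + x * y * v⁻¹ - (l + m) = (v - l) * (v - m) / v := by
          rw [← hlm]; field_simp; ring
        have hpos : 0 < (v - l) * (v - m) / v := by
          apply div_pos _ hv0
          exact mul_pos (by linarith) (by linarith)
        linarith [key ▸ hpos]
      · intro hw
        have hw0 : 0 < w := by linarith
        set s := Real.sqrt (w ^ 2 - 4 * (x * y)) with hs
        have hw2 : 4 * (x * y) ≤ w ^ 2 := by nlinarith [sq_nonneg (l - m)]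
        have hs0 : 0 ≤ s := Real.sqrt_nonneg _
        have hs2 : s ^ 2 = w ^ 2 - 4 * (x * y) := Real.sq_sqrt (by linarith)
        refine ⟨(w + s) / 2, ?_, ?_⟩
        · have hql : l ^ 2 - w * l + x * y < 0 := by nlinarith
          by_contra hc
          push_neg at hc
          nlinarith [mul_nonneg (sub_nonneg.2 hc) hs0, sq_nonneg (l - (w + s) / 2)]
        · have hv0 : 0 < (w + s) / 2 := by positivity
          field_simp
          nlinarith [hs2]
    have hderiv : ∀ v ∈ Ioi l, HasDerivWithinAt (fun v : ℝ => v + x * y * v⁻¹)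
        (1 + x * y * -((v:ℝ) ^ 2)⁻¹) (Ioi l) v := by
      intro v hv
      have hv0 : (0:ℝ) < v := hl.trans hv
      exact (
        ((hasDerivAt_id' v).add ((hasDerivAt_inv hv0.ne').const_mul (x * y))) :
          HasDerivAt (fun v : ℝ => v + x * y * v⁻¹) (1 + x * y * -((v:ℝ) ^ 2)⁻¹) v
        ).hasDerivWithinAt
    have hinj : Set.InjOn (fun v : ℝ => v + x * y * v⁻¹) (Ioi l) := by
      intro v₁ h₁ v₂ h₂ h
      simp only at h
      have h₁0 : (0:ℝ) < v₁ := hl.trans h₁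
      have h₂0 : (0:ℝ) < v₂ := hl.trans h₂
      have e : (v₁ + x * y * v₁⁻¹) * (v₁ * v₂) = (v₂ + x * y * v₂⁻¹) * (v₁ * v₂) := by rw [h]
      have hfac0 : v₁ * v₂ * ((v₁ - v₂) * (v₁ * v₂ - x * y)) = 0 := by
        field_simp at e
        linear_combination (v₁ * v₂) * e
      have hfac : (v₁ - v₂) * (v₁ * v₂ - x * y) = 0 := by
        rcases mul_eq_zero.1 hfac0 with h' | h'
        · exact absurd h' (by positivity)
        · exact h'
      have hgt : 0 < v₁ * v₂ - x * y := by
        nlinarith [mul_pos (sub_pos.2 (mem_Ioi.1 h₁)) (sub_pos.2 (mem_Ioi.1 h₂)),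
          mul_nonneg hl.le (sub_nonneg.2 hml), mul_pos hl (sub_pos.2 (mem_Ioi.1 h₁)),
          mul_pos hl (sub_pos.2 (mem_Ioi.1 h₂))]
      rcases mul_eq_zero.1 hfac with h' | h'
      · linarith
      · linarith
    rw [← himg, my_subst measurableSet_Ioi hderiv hinj]
    refine setIntegral_congr_fun measurableSet_Ioi fun v hv => ?_
    have hv0 : 0 < v := hl.trans hv
    have hv2 : x * y < v ^ 2 := by
      nlinarith [mul_pos (sub_pos.2 (mem_Ioi.1 hv)) (add_pos hv0 hl),
        mul_nonneg hl.le (sub_nonneg.2 hml)]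
    have habs : |1 + x * y * -((v:ℝ) ^ 2)⁻¹| = (v ^ 2 - x * y) * ((v:ℝ) ^ 2)⁻¹ := by
      have e : 1 + x * y * -((v:ℝ) ^ 2)⁻¹ = (v ^ 2 - x * y) * ((v:ℝ) ^ 2)⁻¹ := by
        field_simp
        ring
      rw [e, abs_of_pos (mul_pos (by linarith) (inv_pos.2 (pow_pos hv0 2)))]
    have harg : (v + x * y * v⁻¹) + x + y = (v⁻¹) ^ 2 * ((v + x) * (v + y) * v) := by
      field_simp
      ring
    have hsq : Real.sqrt ((v + x * y * v⁻¹) + x + y) = v⁻¹ * Real.sqrt ((v + x) * (v + y) * v) := by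
      rw [harg, Real.sqrt_mul (sq_nonneg _), Real.sqrt_sq (inv_nonneg.2 hv0.le)]
    have hA : 0 < Real.sqrt ((v + x) * (v + y) * v) := Real.sqrt_pos.2 (by positivity)
    simp only [habs, hsq]
    have h1 : (0:ℝ) < x * y + p * v := by positivity
    field_simp
    ring
  have hC : (∫ w in Ioi (l + m), (Real.sqrt (w + x + y))⁻¹ * (p * w + (p ^ 2 + x * y))⁻¹)
      = (∫ v in Ioi l, (Real.sqrt ((v + x) * (v + y) * v))⁻¹ * (v * (x * y + p * v)⁻¹))
        - ∫ v in Ioi l, (Real.sqrt ((v + x) * (v + y) * v))⁻¹ * (v + p)⁻¹ := by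
    rw [hC0, integral_sub hψint hGl]
  have hD : (∫ t in Ioi (0:ℝ),
      (Real.sqrt (t + p ^ 2 * (l + m + x + y)))⁻¹ * (t + p * (p + l) * (p + m))⁻¹)
      = ∫ w in Ioi (l + m), (Real.sqrt (w + x + y))⁻¹ * (p * w + (p ^ 2 + x * y))⁻¹ := by
    have himg : (fun t : ℝ => l + m + (p ^ 2)⁻¹ * t) '' Ioi 0 = Ioi (l + m) := by
      ext w
      simp only [mem_image, mem_Ioi]
      constructor
      · rintro ⟨t, ht, rfl⟩
        nlinarith [mul_pos (inv_pos.2 (by positivity : (0:ℝ) < p ^ 2)) ht]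
      · intro hw
        refine ⟨p ^ 2 * (w - (l + m)), mul_pos (by positivity) (by linarith), by field_simp; ring⟩
    have hderiv : ∀ t ∈ Ioi (0:ℝ), HasDerivWithinAt (fun t : ℝ => l + m + (p ^ 2)⁻¹ * t)
        ((p ^ 2)⁻¹) (Ioi 0) t := fun t _ =>
      (by simpa using ((hasDerivAt_id t).const_mul ((p^2)⁻¹)).const_add (l + m) :
        HasDerivAt (fun t : ℝ => l + m + (p ^ 2)⁻¹ * t) ((p ^ 2)⁻¹) t).hasDerivWithinAt
    have hinj : Set.InjOn (fun t : ℝ => l + m + (p ^ 2)⁻¹ * t) (Ioi 0) := by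
      intro a _ b _ h
      simp only at h
      have := mul_left_cancel₀ (inv_ne_zero (by positivity : (p:ℝ) ^ 2 ≠ 0)) (by linarith : (p ^ 2)⁻¹ * a = (p ^ 2)⁻¹ * b)
      exact this
    rw [← himg, my_subst measurableSet_Ioi hderiv hinj]
    refine setIntegral_congr_fun measurableSet_Ioi fun t ht => ?_
    have ht0 : (0:ℝ) < t := ht
    have harg : (l + m + (p ^ 2)⁻¹ * t) + x + y
        = (p⁻¹) ^ 2 * (t + p ^ 2 * (l + m + x + y)) := by
      field_simp
      ring
    have hsq : Real.sqrt ((l + m + (p ^ 2)⁻¹ * t) + x + y)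
        = p⁻¹ * Real.sqrt (t + p ^ 2 * (l + m + x + y)) := by
      rw [harg, Real.sqrt_mul (sq_nonneg _), Real.sqrt_sq (inv_nonneg.2 hp.le)]
    have hden : p * (l + m + (p ^ 2)⁻¹ * t) + (p ^ 2 + x * y)
        = (t + p * (p + l) * (p + m)) * p⁻¹ := by
      field_simp
      linear_combination (-p) * hlm
    have hA : 0 < Real.sqrt (t + p ^ 2 * (l + m + x + y)) := Real.sqrt_pos.2 (by positivity)
    have habs : |((p:ℝ) ^ 2)⁻¹| = ((p:ℝ) ^ 2)⁻¹ := abs_of_pos (by positivity)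
    simp only [habs, hsq, hden]
    have h2 : (0:ℝ) < t + p * (p + l) * (p + m) := by positivity
    field_simp
  rw [h1 l hl, h1 m hm, h3, h4, hD, hC, ← hB, hsplit]
  ring

end helpers

theorem stmt15 (x y p l m : ℝ) (hx : 0 < x) (hy : 0 < y) (hp : 0 < p)
    (hl : 0 < l) (hm : 0 < m) (hlm : l * m = x * y) :
    RJ (x + l) (y + l) l (p + l) + RJ (x + m) (y + m) m (p + m) =
      RJ x y 0 p - 3 * RC (p ^ 2 * (l + m + x + y)) (p * (p + l) * (p + m)) := by
  rcases le_total m l with h | h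
  · exact key15 x y p l m hx hy hp hl hm hlm h
  · have := key15 x y p m l hx hy hp hm hl (by linarith [hlm]) h
    rw [show p ^ 2 * (m + l + x + y) = p ^ 2 * (l + m + x + y) by ring,
      show p * (p + m) * (p + l) = p * (p + l) * (p + m) by ring] at this
    linarith [this]
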